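/- Let (E,‖·‖) be a nonzero real normed space that admits an equivalent norm which is analytic on E ∖ {0}. Then there exists a function f : E → ℝ that is real-analytic on all of E, satisfies f(0) = 0, and satisfies inf { f(x) : x ∈ E, ‖x‖ = 1 } > 1. -/

import Mathlib

/-- `N` is a norm on the real vector space `Y`. -/
def IsNorm {Y : Type*} [AddCommGroup Y] [Module ℝ Y] (N : Y → ℝ) : Prop :=
  (∀ x y, N (x + y) ≤ N x + N y) ∧ (∀ (a : ℝ) (x : Y), N (a • x) = |a| * N x) ∧
    ∀ x, N x = 0 → x = 0

/-- `N` is equivalent to the ambient norm of `Y`. -/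
def IsEquivToAmbientNorm {Y : Type*} [NormedAddCommGroup Y] (N : Y → ℝ) : Prop :=
  ∃ a b : ℝ, 0 < a ∧ a ≤ b ∧ ∀ x : Y, a * ‖x‖ ≤ N x ∧ N x ≤ b * ‖x‖

set_option maxHeartbeats 1000000 in
/-- If a nonzero real normed space `E` admits an equivalent norm analytic
off the origin, then there is a real-analytic function `f : E → ℝ` with `f 0 = 0` and
`inf f(S_E) > 1`. -/
theorem analytic_norm_gives_separating_analytic_function
    (E : Type*) [NormedAddCommGroup E] [NormedSpace ℝ E] [Nontrivial E]
    (hN : ∃ N : E → ℝ, IsNorm N ∧ IsEquivToAmbientNorm N ∧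
      AnalyticOnNhd ℝ N {x : E | x ≠ 0}) :
    ∃ f : E → ℝ, AnalyticOnNhd ℝ f Set.univ ∧ f 0 = 0 ∧
      ∃ c : ℝ, 1 < c ∧ ∀ x : E, ‖x‖ = 1 → c ≤ f x := by
  simp only [IsNorm, IsEquivToAmbientNorm] at hN
  obtain ⟨N, ⟨hadd, hsmul, -⟩, ⟨a, b, ha, hab, hbd⟩, hAn⟩ := hN
  have hb : (0:ℝ) < b := lt_of_lt_of_le ha hab
  -- a unit vector
  obtain ⟨x₀, hx₀⟩ := exists_ne (0 : E)
  set u : E := ‖x₀‖⁻¹ • x₀ with hu_def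
  have hu : ‖u‖ = 1 := by
    rw [hu_def, norm_smul, norm_inv, norm_norm,
      inv_mul_cancel₀ (norm_ne_zero_iff.mpr hx₀)]
  have hu0 : u ≠ 0 := by
    intro h; rw [h, norm_zero] at hu; norm_num at hu
  obtain ⟨g, hg1, hgu⟩ := exists_dual_vector ℝ u (norm_ne_zero_iff.mpr hu0)
  rw [hu] at hgu
  set ε : ℝ := a / (2*a + 4*b) with hε_def
  have hε : 0 < ε := div_pos ha (by linarith)
  have hεkey : ε * (a + 2*b) = a / 2 := by
    have h24 : (2*a + 4*b) ≠ 0 := (by linarith : (0:ℝ) < 2*a + 4*b).ne'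
    rw [hε_def, div_mul_eq_mul_div, div_eq_iff h24]; ring
  set e : E := ε • u with he_def
  have hne : ‖e‖ = ε := by
    rw [he_def, norm_smul, hu, Real.norm_eq_abs, abs_of_pos hε, mul_one]
  set H : ℝ → ℝ := fun t => ε^2 * t / (ε^2 + t^2) with hH_def
  have hHb : ∀ t, |H t| ≤ ε / 2 := by
    intro t
    have hd : 0 < ε^2 + t^2 := by positivity
    rw [hH_def]
    simp only []
    rw [abs_div, abs_of_pos hd, div_le_iff₀ hd, abs_mul, abs_of_pos (by positivity : (0:ℝ) < ε^2)]
    nlinarith [sq_nonneg (ε - |t|), sq_abs t, abs_nonneg t, hε.le]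
  have hH0 : H 0 = 0 := by simp [hH_def]
  set φ : E → E := fun x => x + (H (g x) - g x) • u with hφ_def
  have hgφ : ∀ x, g (φ x) = H (g x) := by
    intro x
    simp [hφ_def, map_add, map_smul, hgu, smul_eq_mul]
  -- the points e ± φ x are never 0
  have hne1 : ∀ x : E, e + φ x ≠ 0 := by
    intro x h
    have h1 : g (e + φ x) = ε + H (g x) := by
      simp [he_def, map_add, map_smul, hgu, hgφ, smul_eq_mul]
    have h2 := hHb (g x)
    have := abs_le.mp h2
    rw [h, map_zero] at h1
    linarith [this.1, this.2]
  have hne2 : ∀ x : E, e - φ x ≠ 0 := by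
    intro x h
    have h1 : g (e - φ x) = ε - H (g x) := by
      simp [he_def, map_sub, map_smul, hgu, hgφ, smul_eq_mul]
    have h2 := hHb (g x)
    have := abs_le.mp h2
    rw [h, map_zero] at h1
    linarith [this.1, this.2]
  -- norm facts
  have hNneg : ∀ z : E, N (-z) = N z := by
    intro z
    have := hsmul (-1) z
    simpa using this
  have h2N : ∀ z : E, N ((2:ℝ) • z) = 2 * N z := by
    intro z
    have := hsmul 2 z
    simpa [abs_of_pos] using this
  have key1 : ∀ z : E, 2 * N e ≤ N (e + z) + N (e - z) := by
    intro z
    have h := hadd (e + z) (e - z)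
    have hz : (e + z) + (e - z) = (2:ℝ) • e := by module
    rw [hz, h2N] at h
    exact h
  have key2 : ∀ z : E, 2 * N z ≤ N (e + z) + N (e - z) := by
    intro z
    have h := hadd (e + z) (z - e)
    have hz : (e + z) + (z - e) = (2:ℝ) • z := by module
    rw [hz, h2N] at h
    have hsym : N (z - e) = N (e - z) := by
      rw [← hNneg (e - z)]; congr 1; abel
    rw [hsym] at h
    exact h
  set M : ℝ := 8 + 8 / a with hM_def
  have hM8 : (8:ℝ) ≤ M := by
    rw [hM_def]
    have : 0 < 8 / a := by positivity
    linarith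
  have hMa : 8 / a ≤ M := by
    rw [hM_def]; linarith
  have hM0 : (0:ℝ) ≤ M := by linarith
  refine ⟨fun x => M * ((N (e + φ x) + N (e - φ x)) / 2 - N e + (g x)^2), ?_, ?_, 2, one_lt_two, ?_⟩
  · -- analyticity
    intro x _
    have hgan : AnalyticAt ℝ (fun y : E => g y) x := g.analyticAt x
    have hHan : AnalyticAt ℝ (fun y : E => H (g y)) x := by
      have hden : AnalyticAt ℝ (fun y : E => ε^2 + (g y)^2) x :=
        analyticAt_const.add (hgan.pow 2)
      have hnum : AnalyticAt ℝ (fun y : E => ε^2 * g y) x := analyticAt_const.mul hgan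
      have hd0 : ε^2 + (g x)^2 ≠ 0 := by positivity
      exact hnum.div hden hd0
    have hφan : AnalyticAt ℝ φ x := by
      exact analyticAt_id.add ((hHan.sub hgan).smul analyticAt_const)
    have hN1 : AnalyticAt ℝ (fun y : E => N (e + φ y)) x := by
      have h1 : AnalyticAt ℝ (fun y : E => e + φ y) x := analyticAt_const.add hφan
      exact AnalyticAt.comp (g := N) (f := fun y : E => e + φ y) (hAn _ (hne1 x)) h1
    have hN2 : AnalyticAt ℝ (fun y : E => N (e - φ y)) x := by
      have h1 : AnalyticAt ℝ (fun y : E => e - φ y) x := analyticAt_const.sub hφan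
      exact AnalyticAt.comp (g := N) (f := fun y : E => e - φ y) (hAn _ (hne2 x)) h1
    exact analyticAt_const.mul
      ((((hN1.add hN2).div analyticAt_const two_ne_zero).sub analyticAt_const).add (hgan.pow 2))
  · -- value at 0
    have hφ0 : φ 0 = 0 := by
      simp [hφ_def, hH0]
    show M * ((N (e + φ 0) + N (e - φ 0)) / 2 - N e + g 0 ^ 2) = 0
    rw [hφ0, add_zero, sub_zero, map_zero]
    ring
  · -- sphere bound
    intro x hx
    show (2:ℝ) ≤ M * ((N (e + φ x) + N (e - φ x)) / 2 - N e + g x ^ 2)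
    have hA0 : 0 ≤ (N (e + φ x) + N (e - φ x)) / 2 - N e := by
      have := key1 (φ x)
      linarith
    by_cases hcase : 1/2 ≤ |g x|
    · have hgx2 : (1:ℝ)/4 ≤ (g x)^2 := by
        nlinarith [sq_abs (g x)]
      have hsum : (1:ℝ)/4 ≤ (N (e + φ x) + N (e - φ x)) / 2 - N e + g x ^ 2 := by linarith
      calc (2:ℝ) = 8 * (1/4) := by norm_num
        _ ≤ M * ((N (e + φ x) + N (e - φ x)) / 2 - N e + g x ^ 2) :=
            mul_le_mul hM8 hsum (by norm_num) hM0
    · push_neg at hcase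
      -- ‖φ x‖ ≥ 1/2 - ε/2
      have hφeq : φ x = (x - g x • u) + H (g x) • u := by
        rw [hφ_def]; module
      have h1 : 1 - |g x| ≤ ‖x - g x • u‖ := by
        have := norm_sub_norm_le x (g x • u)
        rw [hx, norm_smul, hu, mul_one, Real.norm_eq_abs] at this
        exact this
      have h2 : ‖x - g x • u‖ - ε/2 ≤ ‖φ x‖ := by
        have h4 : x - g x • u = φ x + -(H (g x) • u) := by rw [hφeq]; abel
        have hh := norm_add_le (φ x) (-(H (g x) • u))
        rw [← h4, norm_neg] at hh
        have h3 : ‖H (g x) • u‖ ≤ ε/2 := by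
          rw [norm_smul, hu, mul_one, Real.norm_eq_abs]; exact hHb (g x)
        linarith
      have hφnorm : 1/2 - ε/2 ≤ ‖φ x‖ := by linarith
      have hNφ : a * ‖φ x‖ ≤ N (φ x) := (hbd (φ x)).1
      have hNe : N e ≤ b * ε := by
        have := (hbd e).2
        rw [hne] at this
        exact this
      have hA : a / 4 ≤ (N (e + φ x) + N (e - φ x)) / 2 - N e := by
        have hk := key2 (φ x)
        have h5 : a * (1/2 - ε/2) ≤ N (φ x) := by
          calc a * (1/2 - ε/2) ≤ a * ‖φ x‖ := by
                apply mul_le_mul_of_nonneg_left hφnorm ha.le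
            _ ≤ N (φ x) := hNφ
        have hcalc : a * (1/2 - ε/2) - b * ε = a/4 := by
          linear_combination (-(1:ℝ)/2) * hεkey
        linarith
      have hgx2 : 0 ≤ (g x)^2 := sq_nonneg _
      have hsum : a/4 ≤ (N (e + φ x) + N (e - φ x)) / 2 - N e + g x ^ 2 := by linarith
      have h2eq : 8 / a * (a / 4) = 2 := by field_simp; ring
      calc (2:ℝ) = 8 / a * (a / 4) := h2eq.symm
        _ ≤ M * ((N (e + φ x) + N (e - φ x)) / 2 - N e + g x ^ 2) :=
            mul_le_mul hMa hsum (by positivity) hM0
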